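/- arXiv:2506.11426 — 2 statements merged into one kernel-verified Lean document; each statement's English description precedes it below -/
import Mathlib

section
/- Let u ∈ ℂ, α ∈ ℂ∖ℤ, β ∈ ℂ with β ≠ 0, and A ∈ ℂ with A ≠ 0. For k ∈ ℤ define [α]_k = ∏_{l=1}^{k−1}(α+l) for k ≥ 1 (empty product 1 for k = 1), [α]_0 = 1, and [α]_k = ∏_{l=k+1}^{0}(α+l) for k ≤ −1 (so [α]_k = Γ(α+k)/Γ(α+1) for k ≥ 1 and [α]_k = Γ(α+1)/Γ(α+1+k) for k ≤ −1). Set T_m = A^m·β^{m(m−1)/2}·∏_{k∈⟨0,m⟩}[α]_k, where ⟨0,m⟩ is the set of integers between 0 and m inclusive. On the open set Ω = {(x,y) ∈ ℂ² : x ≠ u}, the functions t_m(x,y) = exp((α+m)·β·y/(u−x))·(u−x)^{−m(m−1)}·T_m satisfy the bilinear 2dTHE: t_m·∂x∂y t_m − (∂x t_m)·(∂y t_m) = t_{m+1}·t_{m−1} on Ω for every m ∈ ℤ. -/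
/-- Partial derivative in the first (x) variable of a function on ℂ². -/
noncomputable def pdx (u : ℂ × ℂ → ℂ) : ℂ × ℂ → ℂ :=
  fun p => deriv (fun t => u (t, p.2)) p.1

/-- Partial derivative in the second (y) variable of a function on ℂ². -/
noncomputable def pdy (u : ℂ × ℂ → ℂ) : ℂ × ℂ → ℂ :=
  fun p => deriv (fun t => u (p.1, t)) p.2

private lemma two_dvd_mul_pred (k : ℤ) : 2 ∣ k * (k - 1) := by
  have h := Int.even_mul_succ_self (k - 1)
  have e : (k - 1) * ((k - 1) + 1) = k * (k - 1) := by ring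
  rw [e] at h
  exact h.two_dvd

private lemma div2_aux (a b c : ℤ) (ha : 2 ∣ a) (hb : 2 ∣ b) (hc : 2 ∣ c)
    (h : a + b = 2 * c + 2) : a / 2 + b / 2 = c / 2 + c / 2 + 1 := by omega

theorem seed_solution_one_confluent_case
    (u₀ : ℂ) (α β A : ℂ)
    (hα : ∀ m : ℤ, α ≠ (m : ℂ)) (hβ : β ≠ 0) (hA : A ≠ 0)
    (br : ℤ → ℂ)
    (hbr0 : br 0 = 1)
    (hbrpos : ∀ k : ℤ, 1 ≤ k →
      br k = ∏ l ∈ Finset.range (k.toNat - 1), (α + ((l : ℂ) + 1)))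
    (hbrneg : ∀ k : ℤ, k ≤ -1 →
      br k = ∏ l ∈ Finset.range (-k).toNat, (α - (l : ℂ)))
    (T : ℤ → ℂ)
    (hTpos : ∀ m : ℤ, 0 ≤ m →
      T m = A ^ m * β ^ (m * (m - 1) / 2) * ∏ k ∈ Finset.range (m.toNat + 1), br (k : ℤ))
    (hTneg : ∀ m : ℤ, m ≤ 0 →
      T m = A ^ m * β ^ (m * (m - 1) / 2) * ∏ k ∈ Finset.range ((-m).toNat + 1), br (-(k : ℤ)))
    (Ω : Set (ℂ × ℂ)) (hΩ : Ω = {P : ℂ × ℂ | P.1 ≠ u₀})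
    (t : ℤ → ℂ × ℂ → ℂ)
    (ht : ∀ (m : ℤ) (P : ℂ × ℂ),
      t m P = Complex.exp ((α + (m : ℂ)) * β * P.2 / (u₀ - P.1))
        * (u₀ - P.1) ^ (-(m * (m - 1))) * T m) :
    ∀ m : ℤ, ∀ P ∈ Ω,
      t m P * pdx (pdy (t m)) P - pdx (t m) P * pdy (t m) P = t (m + 1) P * t (m - 1) P := by
  -- β exponent bookkeeping
  have hβ' : ∀ m : ℤ, β ^ ((m + 1) * (m + 1 - 1) / 2) * β ^ ((m - 1) * (m - 1 - 1) / 2)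
      = β * (β ^ (m * (m - 1) / 2) * β ^ (m * (m - 1) / 2)) := by
    intro m
    have h := div2_aux ((m+1) * (m+1-1)) ((m-1) * (m-1-1)) (m * (m-1))
      (two_dvd_mul_pred _) (two_dvd_mul_pred _) (two_dvd_mul_pred _) (by ring)
    rw [← zpow_add₀ hβ, ← zpow_add₀ hβ]
    have e : (m + 1) * (m + 1 - 1) / 2 + (m - 1) * (m - 1 - 1) / 2
        = 1 + (m * (m - 1) / 2 + m * (m - 1) / 2) := by linarith
    rw [e, zpow_add₀ hβ, zpow_one]
  have hA' : ∀ m : ℤ, A ^ (m + 1) * A ^ (m - 1) = A ^ m * A ^ m := by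
    intro m
    rw [← zpow_add₀ hA, ← zpow_add₀ hA]
    congr 1
    ring
  -- br in natural-number form
  have brpos' : ∀ j : ℕ, br ((j : ℤ) + 1) = ∏ l ∈ Finset.range j, (α + ((l : ℂ) + 1)) := by
    intro j
    rw [hbrpos ((j : ℤ) + 1) (by omega)]
    have e : (((j : ℤ) + 1).toNat - 1) = j := by omega
    rw [e]
  have brneg' : ∀ j : ℕ, br (-(j : ℤ)) = ∏ l ∈ Finset.range j, (α - (l : ℂ)) := by
    intro j
    cases j with
    | zero => simpa using hbr0
    | succ i =>
      rw [hbrneg (-((i + 1 : ℕ) : ℤ)) (by push_cast; omega)]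
      have e : (-(-((i + 1 : ℕ) : ℤ))).toNat = i + 1 := by omega
      rw [e]
  -- the key multiplicative identity for T
  have Tkey : ∀ m : ℤ, T (m + 1) * T (m - 1) = (α + (m : ℂ)) * β * (T m * T m) := by
    intro m
    rcases lt_trichotomy m 0 with hm | hm | hm
    · -- m ≤ -1
      obtain ⟨K, hK⟩ : ∃ K : ℕ, m = -((K : ℤ) + 1) := ⟨(-m - 1).toNat, by omega⟩
      rw [hTneg (m+1) (by omega), hTneg (m-1) (by omega), hTneg m (by omega)]
      rw [show (-(m+1)).toNat = K from by omega, show (-(m-1)).toNat = K + 2 from by omega,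
        show (-m).toNat = K + 1 from by omega]
      have hQ1 : ∏ k ∈ Finset.range (K + 2 + 1), br (-(k : ℤ))
          = (∏ k ∈ Finset.range (K + 1 + 1), br (-(k : ℤ))) * br (-((K : ℤ) + 2)) := by
        rw [Finset.prod_range_succ]
        push_cast
        ring_nf
      have hQ2 : ∏ k ∈ Finset.range (K + 1 + 1), br (-(k : ℤ))
          = (∏ k ∈ Finset.range (K + 1), br (-(k : ℤ))) * br (-((K : ℤ) + 1)) := by
        rw [Finset.prod_range_succ]
        push_cast
        ring_nf
      have hstep : br (-((K : ℤ) + 2)) = (α + (m : ℂ)) * br (-((K : ℤ) + 1)) := by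
        have e1 : (-((K : ℤ) + 2)) = -(((K + 2 : ℕ) : ℤ)) := by push_cast; ring
        have e2 : (-((K : ℤ) + 1)) = -(((K + 1 : ℕ) : ℤ)) := by push_cast; ring
        rw [e1, e2, brneg', brneg', Finset.prod_range_succ]
        have : (α + (m : ℂ)) = (α - ((K + 1 : ℕ) : ℂ)) := by
          have : (m : ℂ) = -((K : ℂ) + 1) := by rw [hK]; push_cast; ring
          rw [this]; push_cast; ring
        rw [this]
        ring
      rw [hQ1, hQ2, hstep]
      calc A ^ (m+1) * β ^ ((m+1) * (m+1-1) / 2) * (∏ k ∈ Finset.range (K + 1), br (-(k:ℤ)))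
            * (A ^ (m-1) * β ^ ((m-1) * (m-1-1) / 2) *
              ((∏ k ∈ Finset.range (K + 1), br (-(k:ℤ))) * br (-((K:ℤ)+1))
                * ((α + (m:ℂ)) * br (-((K:ℤ)+1)))))
          = (A ^ (m+1) * A ^ (m-1)) * (β ^ ((m+1) * (m+1-1) / 2) * β ^ ((m-1) * (m-1-1) / 2))
            * ((∏ k ∈ Finset.range (K + 1), br (-(k:ℤ))) * (∏ k ∈ Finset.range (K + 1), br (-(k:ℤ)))
              * br (-((K:ℤ)+1)) * br (-((K:ℤ)+1)) * (α + (m:ℂ))) := by ring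
        _ = (A ^ m * A ^ m) * (β * (β ^ (m * (m-1) / 2) * β ^ (m * (m-1) / 2)))
            * ((∏ k ∈ Finset.range (K + 1), br (-(k:ℤ))) * (∏ k ∈ Finset.range (K + 1), br (-(k:ℤ)))
              * br (-((K:ℤ)+1)) * br (-((K:ℤ)+1)) * (α + (m:ℂ))) := by rw [hA' m, hβ' m]
        _ = (α + (m:ℂ)) * β *
            (A ^ m * β ^ (m * (m-1) / 2) *
              ((∏ k ∈ Finset.range (K + 1), br (-(k:ℤ))) * br (-((K:ℤ)+1)))
            * (A ^ m * β ^ (m * (m-1) / 2) *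
              ((∏ k ∈ Finset.range (K + 1), br (-(k:ℤ))) * br (-((K:ℤ)+1))))) := by ring
    · -- m = 0
      subst hm
      norm_num
      rw [hTpos 1 (by norm_num), hTneg (-1) (by norm_num), hTpos 0 le_rfl]
      have hbr1 : br 1 = 1 := by
        have := brpos' 0
        simpa using this
      have hbrm1 : br (-1) = α := by
        have := brneg' 1
        simpa using this
      norm_num [Finset.prod_range_succ, hbr0, hbr1, hbrm1]
      field_simp
    · -- m ≥ 1
      obtain ⟨K, hK⟩ : ∃ K : ℕ, m = (K : ℤ) + 1 := ⟨(m - 1).toNat, by omega⟩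
      rw [hTpos (m+1) (by omega), hTpos (m-1) (by omega), hTpos m (by omega)]
      rw [show (m+1).toNat = K + 2 from by omega, show (m-1).toNat = K from by omega,
        show m.toNat = K + 1 from by omega]
      have hQ1 : ∏ k ∈ Finset.range (K + 2 + 1), br (k : ℤ)
          = (∏ k ∈ Finset.range (K + 1 + 1), br (k : ℤ)) * br ((K : ℤ) + 2) := by
        rw [Finset.prod_range_succ]
        push_cast
        ring_nf
      have hQ2 : ∏ k ∈ Finset.range (K + 1 + 1), br (k : ℤ)
          = (∏ k ∈ Finset.range (K + 1), br (k : ℤ)) * br ((K : ℤ) + 1) := by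
        rw [Finset.prod_range_succ]
        push_cast
        ring_nf
      have hstep : br ((K : ℤ) + 2) = (α + (m : ℂ)) * br ((K : ℤ) + 1) := by
        have e1 : ((K : ℤ) + 2) = ((K + 1 : ℕ) : ℤ) + 1 := by push_cast; ring
        rw [e1, brpos', brpos', Finset.prod_range_succ]
        have : (α + (m : ℂ)) = (α + ((K : ℂ) + 1)) := by
          have : (m : ℂ) = (K : ℂ) + 1 := by rw [hK]; push_cast; ring
          rw [this]
        rw [this]
        ring
      rw [hQ1, hQ2, hstep]
      calc A ^ (m+1) * β ^ ((m+1) * (m+1-1) / 2) *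
            ((∏ k ∈ Finset.range (K + 1), br (k:ℤ)) * br ((K:ℤ)+1)
              * ((α + (m:ℂ)) * br ((K:ℤ)+1)))
            * (A ^ (m-1) * β ^ ((m-1) * (m-1-1) / 2) * ∏ k ∈ Finset.range (K + 1), br (k:ℤ))
          = (A ^ (m+1) * A ^ (m-1)) * (β ^ ((m+1) * (m+1-1) / 2) * β ^ ((m-1) * (m-1-1) / 2))
            * ((∏ k ∈ Finset.range (K + 1), br (k:ℤ)) * (∏ k ∈ Finset.range (K + 1), br (k:ℤ))
              * br ((K:ℤ)+1) * br ((K:ℤ)+1) * (α + (m:ℂ))) := by ring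
        _ = (A ^ m * A ^ m) * (β * (β ^ (m * (m-1) / 2) * β ^ (m * (m-1) / 2)))
            * ((∏ k ∈ Finset.range (K + 1), br (k:ℤ)) * (∏ k ∈ Finset.range (K + 1), br (k:ℤ))
              * br ((K:ℤ)+1) * br ((K:ℤ)+1) * (α + (m:ℂ))) := by rw [hA' m, hβ' m]
        _ = (α + (m:ℂ)) * β *
            (A ^ m * β ^ (m * (m-1) / 2) *
              ((∏ k ∈ Finset.range (K + 1), br (k:ℤ)) * br ((K:ℤ)+1))
            * (A ^ m * β ^ (m * (m-1) / 2) *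
              ((∏ k ∈ Finset.range (K + 1), br (k:ℤ)) * br ((K:ℤ)+1)))) := by ring
  -- analytic part
  intro m P hP
  obtain ⟨x, y⟩ := P
  rw [hΩ] at hP
  have hx : x ≠ u₀ := hP
  have hw : u₀ - x ≠ 0 := sub_ne_zero.mpr (Ne.symm hx)
  -- pdy formula at any point with first coordinate ≠ u₀
  have hy : ∀ s : ℂ, s ≠ u₀ → ∀ y' : ℂ,
      pdy (t m) (s, y') = (α + (m : ℂ)) * β / (u₀ - s) * t m (s, y') := by
    intro s hs y'
    have hws : u₀ - s ≠ 0 := sub_ne_zero.mpr (Ne.symm hs)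
    have hF : (fun τ => t m (s, τ))
        = fun τ => Complex.exp ((α + (m : ℂ)) * β * τ / (u₀ - s))
            * ((u₀ - s) ^ (-(m * (m - 1))) * T m) := by
      funext τ
      rw [ht m (s, τ)]
      ring
    have h1 : HasDerivAt (fun τ : ℂ => (α + (m : ℂ)) * β * τ / (u₀ - s))
        ((α + (m : ℂ)) * β / (u₀ - s)) y' := by
      simpa using ((hasDerivAt_id y').const_mul ((α + (m : ℂ)) * β)).div_const (u₀ - s)
    have hd := (h1.cexp).mul_const ((u₀ - s) ^ (-(m * (m - 1))) * T m)
    simp only [pdy]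
    rw [hF, hd.deriv, ht m (s, y')]
    ring
  -- differentiability in x
  have hgdef : (fun s => t m (s, y))
      = fun s => Complex.exp ((α + (m : ℂ)) * β * y / (u₀ - s))
          * (u₀ - s) ^ (-(m * (m - 1))) * T m := by
    funext s
    exact ht m (s, y)
  have hsub : DifferentiableAt ℂ (fun s : ℂ => u₀ - s) x :=
    (differentiableAt_const u₀).sub differentiableAt_id
  have hgdiff : DifferentiableAt ℂ (fun s => t m (s, y)) x := by
    rw [hgdef]
    have h1 : DifferentiableAt ℂ (fun s : ℂ => (α + (m : ℂ)) * β * y / (u₀ - s)) x :=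
      (differentiableAt_const _).div hsub hw
    have h2 : DifferentiableAt ℂ (fun s : ℂ => (u₀ - s) ^ (-(m * (m - 1)))) x := by
      have := (differentiableAt_zpow (m := -(m * (m - 1))) (x := u₀ - x)).mpr (Or.inl hw)
      exact DifferentiableAt.comp x this hsub
    exact (h1.cexp.mul h2).mul_const (T m)
  have hDx : pdx (t m) (x, y) = deriv (fun s => t m (s, y)) x := rfl
  -- rewrite pdx (pdy (t m))
  have hpdxpdy : pdx (pdy (t m)) (x, y)
      = deriv (fun s => (α + (m : ℂ)) * β / (u₀ - s) * t m (s, y)) x := by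
    simp only [pdx]
    apply Filter.EventuallyEq.deriv_eq
    filter_upwards [eventually_ne_nhds hx] with s hs
    exact hy s hs y
  have h1 : HasDerivAt (fun s : ℂ => (α + (m : ℂ)) * β / (u₀ - s))
      ((α + (m : ℂ)) * β / (u₀ - x) ^ 2) x := by
    have hs : HasDerivAt (fun s : ℂ => u₀ - s) (-1) x := (hasDerivAt_id x).const_sub u₀
    have h2 : HasDerivAt (fun s : ℂ => (α + (m : ℂ)) * β * (u₀ - s)⁻¹)
        ((α + (m : ℂ)) * β * (-(-1) / (u₀ - x) ^ 2)) x := (hs.inv hw).const_mul ((α + (m : ℂ)) * β)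
    have e1 : (fun s : ℂ => (α + (m : ℂ)) * β * (u₀ - s)⁻¹)
        = fun s : ℂ => (α + (m : ℂ)) * β / (u₀ - s) := by
      funext s; rw [div_eq_mul_inv]
    have e2 : (α + (m : ℂ)) * β * (-(-1) / (u₀ - x) ^ 2)
        = (α + (m : ℂ)) * β / (u₀ - x) ^ 2 := by ring
    rw [e1, e2] at h2
    exact h2
  have hmul : HasDerivAt (fun s => (α + (m : ℂ)) * β / (u₀ - s) * t m (s, y))
      ((α + (m : ℂ)) * β / (u₀ - x) ^ 2 * t m (x, y)
        + (α + (m : ℂ)) * β / (u₀ - x) * deriv (fun s => t m (s, y)) x) x :=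
    h1.mul hgdiff.hasDerivAt
  have hpdy0 := hy x hx y
  rw [hpdxpdy, hmul.deriv, hDx, hpdy0]
  -- RHS computation
  have hexp : Complex.exp ((α + ((m : ℂ) + 1)) * β * y / (u₀ - x))
        * Complex.exp ((α + ((m : ℂ) - 1)) * β * y / (u₀ - x))
      = Complex.exp ((α + (m : ℂ)) * β * y / (u₀ - x))
        * Complex.exp ((α + (m : ℂ)) * β * y / (u₀ - x)) := by
    rw [← Complex.exp_add, ← Complex.exp_add]
    congr 1
    ring
  have hzpow : (u₀ - x) ^ (-((m + 1) * (m + 1 - 1))) * (u₀ - x) ^ (-((m - 1) * (m - 1 - 1)))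
      = (u₀ - x) ^ (-(m * (m - 1))) * (u₀ - x) ^ (-(m * (m - 1))) * ((u₀ - x) ^ 2)⁻¹ := by
    have e : ((u₀ - x) ^ 2)⁻¹ = (u₀ - x) ^ (-2 : ℤ) := by
      rw [zpow_neg]; norm_cast
    rw [e, ← zpow_add₀ hw, ← zpow_add₀ hw, ← zpow_add₀ hw]
    congr 1
    ring
  have hRHS : t (m + 1) (x, y) * t (m - 1) (x, y)
      = (α + (m : ℂ)) * β / (u₀ - x) ^ 2 * (t m (x, y) * t m (x, y)) := by
    rw [ht (m + 1) (x, y), ht (m - 1) (x, y), ht m (x, y)]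
    push_cast
    linear_combination
      ((u₀ - x) ^ (-((m + 1) * (m + 1 - 1))) * (u₀ - x) ^ (-((m - 1) * (m - 1 - 1)))
        * (T (m + 1) * T (m - 1))) * hexp
      + (Complex.exp ((α + (m : ℂ)) * β * y / (u₀ - x))
          * Complex.exp ((α + (m : ℂ)) * β * y / (u₀ - x)) * (T (m + 1) * T (m - 1))) * hzpow
      + (Complex.exp ((α + (m : ℂ)) * β * y / (u₀ - x))
          * Complex.exp ((α + (m : ℂ)) * β * y / (u₀ - x))
          * (u₀ - x) ^ (-(m * (m - 1))) * (u₀ - x) ^ (-(m * (m - 1)))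
          * ((u₀ - x) ^ 2)⁻¹) * (Tkey m)
  rw [hRHS]
  ring
end

section
/- Let p, q ∈ ℂ with p ≠ q, let α, β, A ∈ ℂ all nonzero, and let Ω ⊆ ℂ² be a nonempty open set with coordinates (x,y). Let (u_m)_{m∈ℤ} be holomorphic functions on Ω satisfying, for every m ∈ ℤ: (i) ∂x∂y u_m + (β/(p−q))·∂x u_m − (α/(p−q))·∂y u_m = 0; (ii) u_{m+1} = (p−q)·∂y u_m + β·u_m; (iii) u_{m−1} = ((q−p)·∂x u_m + α·u_m)/(α·β). Define τ_m(x,y) = exp(α·β·x·y/(p−q)² − α·x/(p−q))·(p−q)^{−m(m−1)}·A^m·(α·β)^{m(m−1)/2}·u_m(x,y). Then (τ_m)_{m∈ℤ} satisfies the bilinear 2dTHE: τ_m·∂x∂y τ_m − (∂x τ_m)·(∂y τ_m) = τ_{m+1}·τ_{m−1} on Ω for every m ∈ ℤ. -/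
lemma hasDerivAt_sliceX {v : ℂ × ℂ → ℂ} {P : ℂ × ℂ} (h : DifferentiableAt ℂ v P) :
    HasDerivAt (fun t => v (t, P.2)) (pdx v P) P.1 := by
  have h1 : DifferentiableAt ℂ (fun t : ℂ => v (t, P.2)) P.1 := by
    have := h.comp P.1 (f := fun t : ℂ => (t, P.2))
      (differentiableAt_id.prodMk (differentiableAt_const _))
    simpa [Function.comp_def] using this
  simpa [pdx] using h1.hasDerivAt

lemma hasDerivAt_sliceY {v : ℂ × ℂ → ℂ} {P : ℂ × ℂ} (h : DifferentiableAt ℂ v P) :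
    HasDerivAt (fun t => v (P.1, t)) (pdy v P) P.2 := by
  have h1 : DifferentiableAt ℂ (fun t : ℂ => v (P.1, t)) P.2 := by
    have := h.comp P.2 (f := fun t : ℂ => (P.1, t))
      ((differentiableAt_const _).prodMk differentiableAt_id)
    simpa [Function.comp_def] using this
  simpa [pdy] using h1.hasDerivAt

lemma pdx_congr {v w : ℂ × ℂ → ℂ} {Ω : Set (ℂ × ℂ)} (hΩ : IsOpen Ω)
    (h : ∀ Q ∈ Ω, v Q = w Q) {P : ℂ × ℂ} (hP : P ∈ Ω) : pdx v P = pdx w P := by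
  have hev : ∀ᶠ t in nhds P.1, (t, P.2) ∈ Ω := by
    have hc : ContinuousAt (fun t : ℂ => (t, P.2)) P.1 :=
      (continuous_id.prodMk continuous_const).continuousAt
    exact hc (hΩ.mem_nhds (by simpa using hP))
  exact Filter.EventuallyEq.deriv_eq (by filter_upwards [hev] with t ht using h _ ht)

-- constants lemma
lemma Crel (p q : ℂ) (hpq' : p - q ≠ 0) (α β A : ℂ) (hα : α ≠ 0) (hβ : β ≠ 0) (hA : A ≠ 0)
    (m : ℤ) :
    ((p - q) ^ (-((m+1) * m)) * A ^ (m+1) * (α * β) ^ ((m+1) * m / 2)) *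
      ((p - q) ^ (-((m-1) * (m-2))) * A ^ (m-1) * (α * β) ^ ((m-1) * (m-2) / 2)) * (p - q) ^ 2
    = ((p - q) ^ (-(m * (m-1))) * A ^ m * (α * β) ^ (m * (m-1) / 2)) *
      ((p - q) ^ (-(m * (m-1))) * A ^ m * (α * β) ^ (m * (m-1) / 2)) * (α * β) := by
  have hab : α * β ≠ 0 := mul_ne_zero hα hβ
  obtain ⟨c, hc⟩ := Int.even_mul_succ_self m
  obtain ⟨d, hd⟩ := Int.even_mul_succ_self (m - 2)
  obtain ⟨e, he⟩ := Int.even_mul_succ_self (m - 1)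
  have h1 : (m+1) * m = 2 * c := by linear_combination hc
  have h2 : (m-1) * (m-2) = 2 * d := by linear_combination hd
  have h3 : m * (m-1) = 2 * e := by linear_combination he
  have d1 : (m+1) * m / 2 = c := by rw [h1, Int.mul_ediv_cancel_left _ two_ne_zero]
  have d2 : (m-1) * (m-2) / 2 = d := by rw [h2, Int.mul_ediv_cancel_left _ two_ne_zero]
  have d3 : m * (m-1) / 2 = e := by rw [h3, Int.mul_ediv_cancel_left _ two_ne_zero]
  have hcd : c + d = 2 * e + 1 := by
    have h4 : 2 * (c + d) = 2 * (2 * e + 1) := by linear_combination -h1 - h2 + 2 * h3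
    linarith
  have hz1 : (p-q)^(-(2*c)) * (p-q)^(-(2*d)) =
      (p-q)^(-(2*e)) * (p-q)^(-(2*e)) * ((p-q)^(2:ℕ))⁻¹ := by
    rw [← zpow_add₀ hpq', ← zpow_add₀ hpq', ← zpow_natCast (p-q) 2, ← zpow_neg,
      ← zpow_add₀ hpq']
    congr 1; push_cast; omega
  have hz2 : A^(m+1) * A^(m-1) = A^m * A^m := by
    rw [← zpow_add₀ hA, ← zpow_add₀ hA]; congr 1; ring
  have hz3 : (α*β)^c * (α*β)^d = (α*β)^e * (α*β)^e * (α*β) := by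
    rw [← zpow_add₀ hab, show c + d = e + (e + 1) by omega, zpow_add₀ hab, zpow_add₀ hab,
      zpow_one]
    ring
  rw [d1, d2, d3, h1, h2, h3]
  have expand : (p - q) ^ (-(2*c)) * A ^ (m+1) * (α * β) ^ c *
      ((p - q) ^ (-(2*d)) * A ^ (m-1) * (α * β) ^ d) * (p - q) ^ 2
      = ((p-q)^(-(2*c)) * (p-q)^(-(2*d)) * (p-q)^(2:ℕ)) * (A^(m+1)*A^(m-1)) *
        ((α*β)^c * (α*β)^d) := by ring
  rw [expand, hz1, hz2, hz3]
  have h2ne : ((p-q):ℂ)^(2:ℕ) ≠ 0 := pow_ne_zero _ hpq'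
  linear_combination ((p-q)^(-(2*e)) * (p-q)^(-(2*e)) * (A^m * A^m) * ((α*β)^e * (α*β)^e * (α*β))) * inv_mul_cancel₀ h2ne

set_option maxHeartbeats 1600000 in
theorem gelfand_hgf_solves_toda_hirota_doubly_confluent
    (p q : ℂ) (hpq : p ≠ q)
    (α β A : ℂ) (hα : α ≠ 0) (hβ : β ≠ 0) (hA : A ≠ 0)
    (Ω : Set (ℂ × ℂ)) (hΩ : IsOpen Ω) (hne : Ω.Nonempty)
    (u : ℤ → ℂ × ℂ → ℂ)
    (hudiff : ∀ m : ℤ, DifferentiableOn ℂ (u m) Ω)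
    (hpde : ∀ m : ℤ, ∀ P ∈ Ω,
      pdx (pdy (u m)) P + (β / (p - q)) * pdx (u m) P - (α / (p - q)) * pdy (u m) P = 0)
    (hup : ∀ m : ℤ, ∀ P ∈ Ω, u (m + 1) P = (p - q) * pdy (u m) P + β * u m P)
    (hdown : ∀ m : ℤ, ∀ P ∈ Ω,
      u (m - 1) P = ((q - p) * pdx (u m) P + α * u m P) / (α * β))
    (τ : ℤ → ℂ × ℂ → ℂ)
    (hτ : ∀ (m : ℤ) (P : ℂ × ℂ),
      τ m P = Complex.exp (α * β * P.1 * P.2 / (p - q) ^ 2 - α * P.1 / (p - q))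
        * (p - q) ^ (-(m * (m - 1))) * A ^ m * (α * β) ^ (m * (m - 1) / 2) * u m P) :
    ∀ m : ℤ, ∀ P ∈ Ω,
      τ m P * pdx (pdy (τ m)) P - pdx (τ m) P * pdy (τ m) P = τ (m + 1) P * τ (m - 1) P := by
  have hpq' : p - q ≠ 0 := sub_ne_zero.mpr hpq
  have hab : α * β ≠ 0 := mul_ne_zero hα hβ
  set a : ℂ := α * β / (p - q) ^ 2 with ha
  set b : ℂ := -(α / (p - q)) with hb
  set C : ℤ → ℂ := fun k => (p - q) ^ (-(k * (k - 1))) * A ^ k * (α * β) ^ (k * (k - 1) / 2)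
    with hCdef
  have hτ' : ∀ (k : ℤ) (Q : ℂ × ℂ),
      τ k Q = C k * (Complex.exp (a * Q.1 * Q.2 + b * Q.1) * u k Q) := by
    intro k Q
    rw [hτ, show α * β * Q.1 * Q.2 / (p - q) ^ 2 - α * Q.1 / (p - q)
        = a * Q.1 * Q.2 + b * Q.1 by rw [ha, hb]; ring, hCdef]
    ring
  have hdiffAt : ∀ (k : ℤ), ∀ Q ∈ Ω, DifferentiableAt ℂ (u k) Q :=
    fun k Q hQ => (hudiff k).differentiableAt (hΩ.mem_nhds hQ)
  have hEx : ∀ Q : ℂ × ℂ, HasDerivAt (fun t => Complex.exp (a * t * Q.2 + b * t))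
      (Complex.exp (a * Q.1 * Q.2 + b * Q.1) * (a * Q.2 + b)) Q.1 := by
    intro Q
    have h1 : HasDerivAt (fun t : ℂ => a * t * Q.2 + b * t) (a * Q.2 + b) Q.1 := by
      simpa [Pi.add_def] using (((hasDerivAt_id Q.1).const_mul a).mul_const Q.2).add
        ((hasDerivAt_id Q.1).const_mul b)
    exact h1.cexp
  have hEy : ∀ Q : ℂ × ℂ, HasDerivAt (fun s => Complex.exp (a * Q.1 * s + b * Q.1))
      (Complex.exp (a * Q.1 * Q.2 + b * Q.1) * (a * Q.1)) Q.2 := by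
    intro Q
    have h1 : HasDerivAt (fun s : ℂ => a * Q.1 * s + b * Q.1) (a * Q.1) Q.2 := by
      simpa using ((hasDerivAt_id Q.2).const_mul (a * Q.1)).add_const (b * Q.1)
    exact h1.cexp
  -- pdx of τ k on Ω
  have hpdxτ : ∀ (k : ℤ), ∀ Q ∈ Ω, pdx (τ k) Q =
      C k * (Complex.exp (a * Q.1 * Q.2 + b * Q.1) * ((a * Q.2 + b) * u k Q + pdx (u k) Q)) := by
    intro k Q hQ
    have hfun : (fun t => τ k (t, Q.2)) =
        fun t => C k * (Complex.exp (a * t * Q.2 + b * t) * u k (t, Q.2)) :=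
      funext fun t => hτ' k (t, Q.2)
    have hu := hasDerivAt_sliceX (hdiffAt k Q hQ)
    have h2 := ((hEx Q).mul hu).const_mul (C k)
    show deriv (fun t => τ k (t, Q.2)) Q.1 = _
    rw [hfun]; refine h2.deriv.trans ?_
    simp only [Prod.mk.eta]
    ring
  -- pdy of τ k on Ω
  have hpdyτ : ∀ (k : ℤ), ∀ Q ∈ Ω, pdy (τ k) Q =
      C k * (Complex.exp (a * Q.1 * Q.2 + b * Q.1) * (a * Q.1 * u k Q + pdy (u k) Q)) := by
    intro k Q hQ
    have hfun : (fun s => τ k (Q.1, s)) =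
        fun s => C k * (Complex.exp (a * Q.1 * s + b * Q.1) * u k (Q.1, s)) :=
      funext fun s => hτ' k (Q.1, s)
    have hu := hasDerivAt_sliceY (hdiffAt k Q hQ)
    have h2 := ((hEy Q).mul hu).const_mul (C k)
    show deriv (fun s => τ k (Q.1, s)) Q.2 = _
    rw [hfun]; refine h2.deriv.trans ?_
    simp only [Prod.mk.eta]
    ring
  -- pdy (u k) as difference quotient on Ω
  have hF1 : ∀ (k : ℤ), ∀ Q ∈ Ω, pdy (u k) Q = (u (k + 1) Q - β * u k Q) / (p - q) := by
    intro k Q hQ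
    rw [eq_div_iff hpq']
    linear_combination -hup k Q hQ
  intro m P hP
  have hum := hasDerivAt_sliceX (hdiffAt m P hP)
  have hum1 := hasDerivAt_sliceX (hdiffAt (m+1) P hP)
  have hat : HasDerivAt (fun t : ℂ => a * t) a P.1 := by
    simpa using (hasDerivAt_id P.1).const_mul a
  have part1 := hat.mul hum
  have part2 := (hum1.sub (hum.const_mul β)).div_const (p - q)
  -- F2 : mixed derivative via contiguity
  have hF2 : pdx (pdy (u m)) P = (pdx (u (m+1)) P - β * pdx (u m) P) / (p - q) := by
    have hcg : pdx (pdy (u m)) P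
        = pdx (fun Q => (u (m+1) Q - β * u m Q) / (p - q)) P :=
      pdx_congr hΩ (fun Q hQ => hF1 m Q hQ) hP
    rw [hcg]
    simp only [pdx]
    exact part2.deriv
  -- ux1 = α * uy
  have hux1 : pdx (u (m+1)) P = α * pdy (u m) P := by
    have h6 := hpde m P hP
    rw [hF2] at h6
    field_simp at h6
    linear_combination h6
  -- the second mixed derivative of τ m
  have hT3 : pdx (pdy (τ m)) P =
      C m * (Complex.exp (a * P.1 * P.2 + b * P.1) * (a * P.2 + b)
          * (a * P.1 * u m P + (u (m+1) P - β * u m P) / (p - q))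
        + Complex.exp (a * P.1 * P.2 + b * P.1)
          * (a * u m P + a * P.1 * pdx (u m) P
            + (pdx (u (m+1)) P - β * pdx (u m) P) / (p - q))) := by
    have hcg : pdx (pdy (τ m)) P = pdx (fun Q : ℂ × ℂ =>
        C m * (Complex.exp (a * Q.1 * Q.2 + b * Q.1)
          * (a * Q.1 * u m Q + (u (m+1) Q - β * u m Q) / (p - q)))) P := by
      refine pdx_congr hΩ (fun Q hQ => ?_) hP
      rw [hpdyτ m Q hQ, hF1 m Q hQ]
    have htotal := ((hEx P).mul (part1.add part2)).const_mul (C m)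
    rw [hcg]
    conv_lhs => simp only [pdx]
    exact htotal.deriv
  -- constants relation
  have hCrel : C (m+1) * C (m-1) * (p - q) ^ 2 = C m * C m * (α * β) := by
    simp only [hCdef]
    have e1 : (m + 1) - 1 = m := by ring
    have e2 : (m - 1) - 1 = m - 2 := by ring
    rw [e1, e2]
    exact Crel p q hpq' α β A hα hβ hA m
  rw [hτ' m P, hT3, hpdxτ m P hP, hpdyτ m P hP, hτ' (m+1) P, hτ' (m-1) P,
    hup m P hP, hdown m P hP, hux1]
  have hCne : ∀ k : ℤ, C k ≠ 0 := by
    intro k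
    simp only [hCdef]
    exact mul_ne_zero (mul_ne_zero (zpow_ne_zero _ hpq') (zpow_ne_zero _ hA))
      (zpow_ne_zero _ hab)
  obtain ⟨E, hE⟩ : ∃ E, Complex.exp (a * P.1 * P.2 + b * P.1) = E := ⟨_, rfl⟩
  obtain ⟨Cm, hCm⟩ : ∃ c, C m = c := ⟨_, rfl⟩
  obtain ⟨Cp, hCp⟩ : ∃ c, C (m+1) = c := ⟨_, rfl⟩
  obtain ⟨Cm1, hCm1⟩ : ∃ c, C (m-1) = c := ⟨_, rfl⟩
  obtain ⟨u0, hu0⟩ : ∃ c, u m P = c := ⟨_, rfl⟩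
  obtain ⟨ux, hux⟩ : ∃ c, pdx (u m) P = c := ⟨_, rfl⟩
  obtain ⟨uy, huy⟩ : ∃ c, pdy (u m) P = c := ⟨_, rfl⟩
  rw [hCm, hCp, hCm1] at hCrel
  have hCpne : Cp ≠ 0 := hCp ▸ hCne (m+1)
  rw [hE, hCm, hCp, hCm1, hu0, hux, huy]
  rw [show q - p = -(p - q) by ring]
  obtain ⟨s, hsdef⟩ : ∃ s, p - q = s := ⟨_, rfl⟩
  rw [hsdef]
  have hs : s ≠ 0 := hsdef ▸ hpq'
  have hCrel' : Cp * Cm1 * s ^ 2 = Cm * Cm * (α * β) := by rw [← hsdef]; exact hCrel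
  have ha2 : a * s ^ 2 = α * β := by rw [ha, ← hsdef]; field_simp
  rw [show (s * uy + β * u0 - β * u0) / s = uy by rw [add_sub_cancel_right, mul_div_cancel_left₀ _ hs]]
  obtain ⟨F, hFdef⟩ : ∃ F, (α * uy - β * ux) / s = F := ⟨_, rfl⟩
  have hF2 : F * s = α * uy - β * ux := by rw [← hFdef]; field_simp
  rw [hFdef]
  obtain ⟨G, hGdef⟩ : ∃ G, (-s * ux + α * u0) / (α * β) = G := ⟨_, rfl⟩
  have hG2 : G * (α * β) = -s * ux + α * u0 := by rw [← hGdef]; field_simp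
  rw [hGdef]
  refine mul_left_cancel₀ (mul_ne_zero (pow_ne_zero 2 hs) hab) ?_
  linear_combination (Cm^2 * E^2 * u0^2 * (α * β)) * ha2
    + (Cm^2 * E^2 * s * (α * β) * u0) * hF2
    - ((α * β) * E^2 * (s * uy + β * u0) * G) * hCrel'
    - (Cm^2 * (α * β) * E^2 * (s * uy + β * u0)) * hG2
end
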